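/- Let H_1, …, H_k and H be Hilbert spaces, and let T, A be nonzero bounded k-linear maps from H_1 × ⋯ × H_k to H. Then T ⊥_B A if and only if 0 lies in the convex hull of W(T,A) := { β ∈ F : there exists a sequence (x⃗ₙ) in S_{H_1} × ⋯ × S_{H_k} with ‖T x⃗ₙ‖ → ‖T‖ and ⟨A x⃗ₙ, T x⃗ₙ⟩ → β }. -/

import Mathlib

open Set Filter Topology RCLike

theorem myIsCompact_convexHull {E : Type*} [NormedAddCommGroup E] [NormedSpace ℝ E]
    [FiniteDimensional ℝ E] {s : Set E} (hs : IsCompact s) :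
    IsCompact (convexHull ℝ s) := by
  rcases s.eq_empty_or_nonempty with rfl | ⟨s₀, hs₀⟩
  · simp
  · set n := Module.finrank ℝ E + 1 with hn
    set g : (Fin n → ℝ) × (Fin n → E) → E := fun p => ∑ i, p.1 i • p.2 i with hg
    have hgc : Continuous g := by
      apply continuous_finset_sum
      intro i _
      exact ((continuous_apply i).comp continuous_fst).smul
        ((continuous_apply i).comp continuous_snd)
    have hK : IsCompact ((stdSimplex ℝ (Fin n)) ×ˢ (Set.pi Set.univ fun _ : Fin n => s)) :=
      (isCompact_stdSimplex ℝ _).prod (isCompact_univ_pi fun _ => hs)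
    have himg : convexHull ℝ s
        = g '' ((stdSimplex ℝ (Fin n)) ×ˢ (Set.pi Set.univ fun _ : Fin n => s)) := by
      apply Subset.antisymm
      · intro x hx
        obtain ⟨ι, hι, z, w, hzs, hai, hw0, hw1, hwx⟩ :=
          eq_pos_convex_span_of_mem_convexHull hx
        have hcard : Fintype.card ι ≤ n :=
          hai.card_le_finrank_succ.trans (Nat.succ_le_succ (Submodule.finrank_le _))
        have e : (ι ⊕ Fin (n - Fintype.card ι)) ≃ Fin n :=
          Fintype.equivFinOfCardEq (by simp [Nat.add_sub_cancel' hcard])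
        refine ⟨(Sum.elim w 0 ∘ e.symm, Sum.elim z (fun _ => s₀) ∘ e.symm),
          ⟨⟨?_, ?_⟩, ?_⟩, ?_⟩
        · intro j
          rcases h : e.symm j with i | i <;> simp [h, (hw0 _).le]
        · show ∑ j : Fin n, Sum.elim w 0 (e.symm j) = 1
          rw [Fintype.sum_equiv e.symm _ (Sum.elim w 0) (fun j => rfl)]
          simpa using hw1
        · intro j _
          rcases h : e.symm j with i | i
          · simpa [h] using hzs (mem_range_self i)
          · simpa [h] using hs₀
        · show ∑ j : Fin n,
            Sum.elim w 0 (e.symm j) • Sum.elim z (fun _ => s₀) (e.symm j) = x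
          rw [Fintype.sum_equiv e.symm _
            (fun p => Sum.elim w 0 p • Sum.elim z (fun _ => s₀) p) (fun j => rfl)]
          simpa using hwx
      · rintro y ⟨⟨wz, z⟩, ⟨⟨hw0, hw1⟩, hz⟩, rfl⟩
        exact (convex_convexHull ℝ s).sum_mem (fun i _ => hw0 i) hw1
          (fun i _ => subset_convexHull ℝ s (hz i (mem_univ i)))
    rw [himg]
    exact hK.image hgc

section
variable {𝕜 : Type*} [RCLike 𝕜] {k : ℕ} {H : Fin k → Type*}
  [∀ i, NormedAddCommGroup (H i)] [∀ i, InnerProductSpace 𝕜 (H i)]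
  {H' : Type*} [NormedAddCommGroup H'] [InnerProductSpace 𝕜 H']

theorem myNorm_le_of_sphere (T : ContinuousMultilinearMap 𝕜 H H') {M : ℝ} (hM : 0 ≤ M)
    (h : ∀ x : ∀ i, H i, (∀ i, ‖x i‖ = 1) → ‖T x‖ ≤ M) : ‖T‖ ≤ M := by
  apply T.opNorm_le_bound hM
  intro x
  by_cases hx : ∀ i, x i ≠ 0
  · set c : Fin k → 𝕜 := fun i => (‖x i‖ : 𝕜) with hcdef
    have hc : ∀ i, c i ≠ 0 := fun i => by
      simp [hcdef, RCLike.ofReal_eq_zero, norm_eq_zero, hx i]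
    set u : ∀ i, H i := fun i => (c i)⁻¹ • x i with hudef
    have hu : ∀ i, ‖u i‖ = 1 := by
      intro i
      rw [hudef]
      simp only [norm_smul, norm_inv, hcdef, RCLike.norm_ofReal, abs_norm]
      field_simp [norm_ne_zero_iff.mpr (hx i)]
    have hxu : x = fun i => c i • u i := funext fun i => (smul_inv_smul₀ (hc i) (x i)).symm
    calc ‖T x‖ = ‖(∏ i, c i) • T u‖ := by
          conv_lhs => rw [hxu]
          rw [T.map_smul_univ]
      _ = (∏ i, ‖x i‖) * ‖T u‖ := by
          rw [norm_smul, norm_prod]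
          simp [hcdef]
      _ ≤ (∏ i, ‖x i‖) * M := by
          refine mul_le_mul_of_nonneg_left (h u hu) (Finset.prod_nonneg fun i _ => norm_nonneg _)
      _ = M * ∏ i, ‖x i‖ := mul_comm _ _
  · push_neg at hx
    obtain ⟨i, hi⟩ := hx
    rw [T.map_coord_zero i hi, norm_zero]
    have : (∏ j, ‖x j‖) = 0 := Finset.prod_eq_zero (Finset.mem_univ i) (by simp [hi])
    rw [this, mul_zero]

theorem myUnit_exists {T : ContinuousMultilinearMap 𝕜 H H'} (hT : T ≠ 0) :
    ∃ e : ∀ i, H i, ∀ i, ‖e i‖ = 1 := by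
  obtain ⟨y, hy⟩ := DFunLike.ne_iff.mp hT
  have hyi : ∀ i, y i ≠ 0 := by
    intro i h
    exact hy (by rw [T.map_coord_zero i h]; rfl)
  refine ⟨fun i => ((‖y i‖ : 𝕜))⁻¹ • y i, fun i => ?_⟩
  simp only [norm_smul, norm_inv, RCLike.norm_ofReal, abs_norm]
  field_simp [norm_ne_zero_iff.mpr (hyi i)]

theorem myNorming {T : ContinuousMultilinearMap 𝕜 H H'} (hT : T ≠ 0) {ε : ℝ} (hε : 0 < ε) :
    ∃ x : ∀ i, H i, (∀ i, ‖x i‖ = 1) ∧ ‖T‖ - ε < ‖T x‖ := by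
  by_contra h
  push_neg at h
  obtain ⟨e, he⟩ := myUnit_exists hT
  rcases le_or_gt 0 (‖T‖ - ε) with h0 | h0
  · have := myNorm_le_of_sphere T h0 (fun x hx => h x hx)
    linarith
  · linarith [h e he, norm_nonneg (T e)]
end

theorem myExists_mu {𝕜 : Type*} [RCLike 𝕜] (f : 𝕜 →L[ℝ] ℝ) :
    ∃ μ : 𝕜, ∀ β, f β = re ((starRingEnd 𝕜) μ * β) := by
  refine ⟨((f 1 : ℝ) : 𝕜) + ((f I : ℝ) : 𝕜) * I, fun β => ?_⟩
  have h1 : f β = re β * f 1 + im β * f I := by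
    conv_lhs => rw [show β = re β • (1:𝕜) + im β • (I : 𝕜) by
      rw [real_smul_eq_coe_mul, real_smul_eq_coe_mul, mul_one, re_add_im]]
    rw [map_add, map_smul, map_smul, smul_eq_mul, smul_eq_mul]
  have h2 : re ((starRingEnd 𝕜) (((f 1 : ℝ) : 𝕜) + ((f I : ℝ) : 𝕜) * I) * β)
      = f 1 * re β + f I * im β := by
    have hconj : (starRingEnd 𝕜) (((f 1 : ℝ) : 𝕜) + ((f I : ℝ) : 𝕜) * I)
        = ((f 1 : ℝ) : 𝕜) - ((f I : ℝ) : 𝕜) * I := by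
      rw [map_add, map_mul, conj_ofReal, conj_ofReal, conj_I]
      ring
    rw [hconj, sub_mul, mul_assoc, map_sub, re_ofReal_mul, re_ofReal_mul, I_mul_re]
    ring
  rw [h1, h2]; ring

theorem mytendsto {X : Type*} [PseudoMetricSpace X] {u : ℕ → X} {a : X}
    (h : ∀ n : ℕ, dist (u n) a ≤ 1 / (n + 1)) : Tendsto u atTop (𝓝 a) := by
  rw [tendsto_iff_dist_tendsto_zero]
  exact squeeze_zero (fun n => dist_nonneg) h tendsto_one_div_add_atTop_nhds_zero_nat

section
variable {𝕜 : Type*} [RCLike 𝕜] {k : ℕ} {H : Fin k → Type*}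
  [∀ i, NormedAddCommGroup (H i)] [∀ i, InnerProductSpace 𝕜 (H i)]
  {H' : Type*} [NormedAddCommGroup H'] [InnerProductSpace 𝕜 H']

theorem myApply_le (S : ContinuousMultilinearMap 𝕜 H H') (x : ∀ i, H i)
    (hx : ∀ i, ‖x i‖ = 1) : ‖S x‖ ≤ ‖S‖ := by
  have := S.le_opNorm x
  simpa [hx] using this

theorem myMemW (T A : ContinuousMultilinearMap 𝕜 H H') {β : 𝕜}
    (h : ∀ n : ℕ, ∃ y : ∀ i, H i, (∀ i, ‖y i‖ = 1) ∧ |‖T y‖ - ‖T‖| ≤ 1 / (n + 1) ∧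
      ‖(inner 𝕜 (A y) (T y) : 𝕜) - β‖ ≤ 1 / (n + 1)) :
    β ∈ {β : 𝕜 | ∃ x : ℕ → ∀ i, H i,
      (∀ n i, ‖x n i‖ = 1) ∧
      Tendsto (fun n => ‖T (x n)‖) atTop (𝓝 ‖T‖) ∧
      Tendsto (fun n => (inner 𝕜 (A (x n)) (T (x n)) : 𝕜)) atTop (𝓝 β)} := by
  choose y h1 h2 h3 using h
  refine ⟨y, h1, mytendsto ?_, mytendsto ?_⟩
  · intro n; rw [Real.dist_eq]; exact h2 n
  · intro n; rw [dist_eq_norm]; exact h3 n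

theorem myClosedW (T A : ContinuousMultilinearMap 𝕜 H H') :
    IsClosed {β : 𝕜 | ∃ x : ℕ → ∀ i, H i,
      (∀ n i, ‖x n i‖ = 1) ∧
      Tendsto (fun n => ‖T (x n)‖) atTop (𝓝 ‖T‖) ∧
      Tendsto (fun n => (inner 𝕜 (A (x n)) (T (x n)) : 𝕜)) atTop (𝓝 β)} := by
  apply isClosed_of_closure_subset
  intro β hβ
  apply myMemW T A
  intro n
  have hpos : 0 < 1 / (2 * ((n : ℝ) + 1)) := by positivity
  obtain ⟨b, hb, hdb⟩ := Metric.mem_closure_iff.mp hβ _ hpos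
  obtain ⟨x, hx1, hx2, hx3⟩ := hb
  obtain ⟨N₁, hN₁⟩ := Metric.tendsto_atTop.mp hx2 _ hpos
  obtain ⟨N₂, hN₂⟩ := Metric.tendsto_atTop.mp hx3 _ hpos
  refine ⟨x (max N₁ N₂), hx1 _, ?_, ?_⟩
  · have := hN₁ (max N₁ N₂) (le_max_left _ _)
    rw [Real.dist_eq] at this
    have h2 : 1 / (2 * ((n : ℝ) + 1)) ≤ 1 / ((n : ℝ) + 1) := by
      rw [div_le_div_iff₀ (by positivity) (by positivity)]; nlinarith [Nat.cast_nonneg (α := ℝ) n]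
    linarith [this.le]
  · have ha := hN₂ (max N₁ N₂) (le_max_right _ _)
    rw [dist_eq_norm] at ha
    have hb' : ‖b - β‖ < 1 / (2 * ((n : ℝ) + 1)) := by
      rw [← dist_eq_norm, dist_comm]; exact hdb
    calc ‖(inner 𝕜 (A (x (max N₁ N₂))) (T (x (max N₁ N₂))) : 𝕜) - β‖
        ≤ ‖(inner 𝕜 (A (x (max N₁ N₂))) (T (x (max N₁ N₂))) : 𝕜) - b‖ + ‖b - β‖ :=
          norm_sub_le_norm_sub_add_norm_sub _ _ _
      _ ≤ 1 / ((n : ℝ) + 1) := by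
          have heq : 1 / (2 * ((n:ℝ) + 1)) + 1 / (2 * ((n:ℝ) + 1)) = 1 / ((n:ℝ) + 1) := by
            field_simp
            norm_num
          linarith [ha.le, hb'.le]

end

theorem stmt5 {𝕜 : Type*} [RCLike 𝕜] {k : ℕ} {H : Fin k → Type*}
    [∀ i, NormedAddCommGroup (H i)] [∀ i, InnerProductSpace 𝕜 (H i)]
    [∀ i, CompleteSpace (H i)]
    {H' : Type*} [NormedAddCommGroup H'] [InnerProductSpace 𝕜 H'] [CompleteSpace H']
    (T A : ContinuousMultilinearMap 𝕜 H H') (hT : T ≠ 0) (hA : A ≠ 0) :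
    (∀ lam : 𝕜, ‖T‖ ≤ ‖T + lam • A‖) ↔
      (0 : 𝕜) ∈ convexHull ℝ {β : 𝕜 | ∃ x : ℕ → ∀ i, H i,
        (∀ n i, ‖x n i‖ = 1) ∧
        Tendsto (fun n => ‖T (x n)‖) atTop (𝓝 ‖T‖) ∧
        Tendsto (fun n => (inner 𝕜 (A (x n)) (T (x n)) : 𝕜)) atTop (𝓝 β)} := by
  set W : Set 𝕜 := {β : 𝕜 | ∃ x : ℕ → ∀ i, H i,
        (∀ n i, ‖x n i‖ = 1) ∧
        Tendsto (fun n => ‖T (x n)‖) atTop (𝓝 ‖T‖) ∧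
        Tendsto (fun n => (inner 𝕜 (A (x n)) (T (x n)) : 𝕜)) atTop (𝓝 β)} with hWdef
  have hTpos : (0 : ℝ) < ‖T‖ := norm_pos_iff.mpr hT
  constructor
  · -- (⇒)
    intro orth
    by_contra h0
    haveI : ProperSpace 𝕜 := FiniteDimensional.proper ℝ 𝕜
    -- W is compact
    have hWsub : W ⊆ Metric.closedBall (0 : 𝕜) (‖A‖ * ‖T‖) := by
      rintro β ⟨x, hx, -, h3⟩
      rw [Metric.mem_closedBall, dist_zero_right]
      refine le_of_tendsto h3.norm (Eventually.of_forall fun n => ?_)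
      calc ‖(inner 𝕜 (A (x n)) (T (x n)) : 𝕜)‖ ≤ ‖A (x n)‖ * ‖T (x n)‖ :=
            norm_inner_le_norm _ _
        _ ≤ ‖A‖ * ‖T‖ := mul_le_mul (myApply_le A _ (hx n)) (myApply_le T _ (hx n))
            (norm_nonneg _) (norm_nonneg _)
    have hWc : IsCompact W :=
      Metric.isCompact_of_isClosed_isBounded (myClosedW T A)
        (Metric.isBounded_closedBall.subset hWsub)
    obtain ⟨f, u, hfu0, hfW⟩ := _root_.geometric_hahn_banach_point_closed
      (convex_convexHull ℝ W) (myIsCompact_convexHull hWc).isClosed h0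
    have hu : 0 < u := by simpa using hfu0
    obtain ⟨μ, hμ⟩ := myExists_mu f
    have hfW' : ∀ β ∈ W, u < f β := fun β hβ => hfW β (subset_convexHull ℝ W hβ)
    -- main claim
    have claim : ∃ δ : ℝ, 0 < δ ∧ ∀ x : ∀ i, H i, (∀ i, ‖x i‖ = 1) →
        ‖T x‖ ^ 2 ≤ ‖T‖ ^ 2 - δ ∨ u / 2 ≤ f (inner 𝕜 (A x) (T x) : 𝕜) := by
      by_contra hcl
      push_neg at hcl
      have hseq : ∀ n : ℕ, ∃ x : ∀ i, H i, (∀ i, ‖x i‖ = 1) ∧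
          ‖T‖ ^ 2 - 1 / (n + 1) < ‖T x‖ ^ 2 ∧ f (inner 𝕜 (A x) (T x) : 𝕜) < u / 2 := by
        intro n
        obtain ⟨x, hx, hx1, hx2⟩ := hcl (1 / ((n : ℝ) + 1)) (by positivity)
        exact ⟨x, hx, by linarith, by linarith⟩
      choose x hx h1 h2 using hseq
      have hsq : Tendsto (fun n => ‖T (x n)‖ ^ 2) atTop (𝓝 (‖T‖ ^ 2)) := by
        apply tendsto_of_tendsto_of_tendsto_of_le_of_le
          (g := fun n : ℕ => ‖T‖ ^ 2 - 1 / ((n : ℝ) + 1)) (h := fun _ : ℕ => ‖T‖ ^ 2)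
        · simpa using tendsto_const_nhds.sub (tendsto_one_div_add_atTop_nhds_zero_nat (𝕜 := ℝ))
        · exact tendsto_const_nhds
        · exact fun n => (h1 n).le
        · exact fun n => pow_le_pow_left₀ (norm_nonneg _) (myApply_le T (x n) (hx n)) 2
      have hTx : Tendsto (fun n => ‖T (x n)‖) atTop (𝓝 ‖T‖) := by
        have := hsq.sqrt
        simp_rw [Real.sqrt_sq (norm_nonneg _)] at this
        exact this
      have hmem : ∀ n, (inner 𝕜 (A (x n)) (T (x n)) : 𝕜) ∈
          Metric.closedBall (0 : 𝕜) (‖A‖ * ‖T‖) := by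
        intro n
        rw [Metric.mem_closedBall, dist_zero_right]
        calc ‖(inner 𝕜 (A (x n)) (T (x n)) : 𝕜)‖ ≤ ‖A (x n)‖ * ‖T (x n)‖ :=
              norm_inner_le_norm _ _
          _ ≤ ‖A‖ * ‖T‖ := mul_le_mul (myApply_le A _ (hx n)) (myApply_le T _ (hx n))
              (norm_nonneg _) (norm_nonneg _)
      obtain ⟨β, -, φ, hφ, hφt⟩ :=
        tendsto_subseq_of_bounded Metric.isBounded_closedBall hmem
      have hβW : β ∈ W :=
        ⟨fun n => x (φ n), fun n => hx (φ n), hTx.comp hφ.tendsto_atTop, hφt⟩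
      have hfβ : f β ≤ u / 2 :=
        le_of_tendsto ((f.continuous.tendsto β).comp hφt)
          (Eventually.of_forall fun n => (h2 (φ n)).le)
      linarith [hfW' β hβW]
    obtain ⟨δ, hδ, hcase⟩ := claim
    set C : ℝ := ‖μ‖ * ‖A‖ with hCdef
    have hC : 0 ≤ C := mul_nonneg (norm_nonneg _) (norm_nonneg _)
    set D : ℝ := ‖f‖ * (‖A‖ * ‖T‖) with hDdef
    have hD : 0 ≤ D := mul_nonneg (norm_nonneg _) (mul_nonneg (norm_nonneg _) (norm_nonneg _))
    set t : ℝ := min 1 (min (u / (2 * C ^ 2 + 1)) (δ / (2 * (2 * D + C ^ 2) + 1))) with htdef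
    have ht : 0 < t := lt_min one_pos (lt_min (by positivity) (by positivity))
    have ht1 : t ≤ 1 := min_le_left _ _
    have htu : t ≤ u / (2 * C ^ 2 + 1) :=
      le_trans (min_le_right 1 _) (min_le_left _ _)
    have htd : t ≤ δ / (2 * (2 * D + C ^ 2) + 1) :=
      le_trans (min_le_right 1 _) (min_le_right _ _)
    have ht2 : t * (2 * C ^ 2 + 1) ≤ u := (le_div_iff₀ (by positivity)).mp htu
    have ht3 : t * (2 * (2 * D + C ^ 2) + 1) ≤ δ := (le_div_iff₀ (by positivity)).mp htd
    set ε : ℝ := min (t * u / 2) (δ / 2) with hεdef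
    have hε : 0 < ε := lt_min (by positivity) (by positivity)
    set lam : 𝕜 := -(((t : ℝ) : 𝕜) * μ) with hlam
    have key : ∀ x : ∀ i, H i, (∀ i, ‖x i‖ = 1) →
        ‖(T + lam • A) x‖ ^ 2 ≤ ‖T‖ ^ 2 - ε := by
      intro x hx
      have e1 : (T + lam • A) x = T x + lam • A x := rfl
      have e2 : re (inner 𝕜 (T x) (lam • A x) : 𝕜) = -(t * f (inner 𝕜 (A x) (T x) : 𝕜)) := by
        rw [inner_smul_right, hlam, neg_mul, map_neg, mul_assoc, re_ofReal_mul]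
        have e2' : re (μ * (inner 𝕜 (T x) (A x) : 𝕜)) = f (inner 𝕜 (A x) (T x) : 𝕜) := by
          rw [hμ]
          calc re (μ * (inner 𝕜 (T x) (A x) : 𝕜))
              = re ((starRingEnd 𝕜) (μ * (inner 𝕜 (T x) (A x) : 𝕜))) := (conj_re _).symm
            _ = re ((starRingEnd 𝕜) μ * (inner 𝕜 (A x) (T x) : 𝕜)) := by
                rw [map_mul, inner_conj_symm]
        rw [e2']
      have e3 : ‖lam • A x‖ ≤ t * C := by
        have hnl : ‖lam‖ = t * ‖μ‖ := by
          rw [hlam, norm_neg, norm_mul, RCLike.norm_ofReal, abs_of_pos ht]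
        rw [norm_smul, hnl, hCdef, mul_assoc]
        exact mul_le_mul_of_nonneg_left
          (mul_le_mul_of_nonneg_left (myApply_le A x hx) (norm_nonneg μ)) ht.le
      have e3' : ‖lam • A x‖ ^ 2 ≤ (t * C) ^ 2 :=
        pow_le_pow_left₀ (norm_nonneg _) e3 2
      have habs : |f (inner 𝕜 (A x) (T x) : 𝕜)| ≤ D := by
        rw [← Real.norm_eq_abs]
        calc ‖f (inner 𝕜 (A x) (T x) : 𝕜)‖ ≤ ‖f‖ * ‖(inner 𝕜 (A x) (T x) : 𝕜)‖ :=
              f.le_opNorm _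
          _ ≤ D := by
              rw [hDdef]
              refine mul_le_mul_of_nonneg_left ?_ (norm_nonneg f)
              calc ‖(inner 𝕜 (A x) (T x) : 𝕜)‖ ≤ ‖A x‖ * ‖T x‖ := norm_inner_le_norm _ _
                _ ≤ ‖A‖ * ‖T‖ := mul_le_mul (myApply_le A _ hx) (myApply_le T _ hx)
                    (norm_nonneg _) (norm_nonneg _)
      rw [e1, norm_add_sq (𝕜 := 𝕜), e2]
      have hTxle : ‖T x‖ ^ 2 ≤ ‖T‖ ^ 2 :=
        pow_le_pow_left₀ (norm_nonneg _) (myApply_le T x hx) 2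
      have hb3 : ‖lam • A x‖ ^ 2 ≤ t * (t * C ^ 2) := by
        calc ‖lam • A x‖ ^ 2 ≤ (t * C) ^ 2 := e3'
          _ = t * (t * C ^ 2) := by ring
      rcases hcase x hx with hc1 | hc2
      · have hεle : ε ≤ δ / 2 := min_le_right _ _
        have hfb : -(f (inner 𝕜 (A x) (T x) : 𝕜)) ≤ D := by
          have := (abs_le.mp habs).1; linarith
        have b1 : t * -(f (inner 𝕜 (A x) (T x) : 𝕜)) ≤ t * D :=
          mul_le_mul_of_nonneg_left hfb ht.le
        have b2 : t * (t * C ^ 2) ≤ t * C ^ 2 := by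
          have h2' : t * (t * C ^ 2) ≤ 1 * (t * C ^ 2) :=
            mul_le_mul_of_nonneg_right ht1 (by positivity)
          linarith
        linarith [ht3]
      · have hεle : ε ≤ t * u / 2 := min_le_left _ _
        have hb1 : t * C ^ 2 ≤ u / 2 := by linarith [ht2]
        have hb2 : t * (t * C ^ 2) ≤ t * (u / 2) := mul_le_mul_of_nonneg_left hb1 ht.le
        have hfb2 : t * (u / 2) ≤ t * f (inner 𝕜 (A x) (T x) : 𝕜) :=
          mul_le_mul_of_nonneg_left hc2 ht.le
        linarith [hTxle]
    have hnorm : ‖T + lam • A‖ ≤ Real.sqrt (‖T‖ ^ 2 - ε) := by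
      apply myNorm_le_of_sphere _ (Real.sqrt_nonneg _)
      intro x hx
      calc ‖(T + lam • A) x‖ = Real.sqrt (‖(T + lam • A) x‖ ^ 2) :=
            (Real.sqrt_sq (norm_nonneg _)).symm
        _ ≤ Real.sqrt (‖T‖ ^ 2 - ε) := Real.sqrt_le_sqrt (key x hx)
    have hlt : Real.sqrt (‖T‖ ^ 2 - ε) < ‖T‖ := by
      rw [Real.sqrt_lt' hTpos]
      linarith
    linarith [orth lam, hnorm, hlt]
  · -- (⇐)
    intro h lam
    set Cc : ℝ := ‖T + lam • A‖ * ‖T‖ - ‖T‖ ^ 2 with hCc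
    have hlin : IsLinearMap ℝ (fun β : 𝕜 => re ((starRingEnd 𝕜) lam * β)) := by
      constructor
      · intro a b; rw [mul_add, map_add]
      · intro c a
        rw [real_smul_eq_coe_mul, mul_left_comm, re_ofReal_mul, smul_eq_mul]
    have hWs : W ⊆ {β : 𝕜 | re ((starRingEnd 𝕜) lam * β) ≤ Cc} := by
      rintro β ⟨x, hx, h2, h3⟩
      have key : ∀ n, ‖T (x n)‖ ^ 2 + re ((starRingEnd 𝕜) lam * (inner 𝕜 (A (x n)) (T (x n)) : 𝕜))
          ≤ ‖T + lam • A‖ * ‖T (x n)‖ := by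
        intro n
        have e1 : (T + lam • A) (x n) = T (x n) + lam • A (x n) := rfl
        have e2 : re (inner 𝕜 ((T + lam • A) (x n)) (T (x n)) : 𝕜)
            = ‖T (x n)‖ ^ 2 + re ((starRingEnd 𝕜) lam * (inner 𝕜 (A (x n)) (T (x n)) : 𝕜)) := by
          rw [e1, inner_add_left, inner_smul_left, map_add, inner_self_eq_norm_sq]
        have e3 : re (inner 𝕜 ((T + lam • A) (x n)) (T (x n)) : 𝕜)
            ≤ ‖T + lam • A‖ * ‖T (x n)‖ :=
          le_trans (le_trans (le_abs_self _) (abs_re_le_norm _))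
            (le_trans (norm_inner_le_norm _ _)
              (mul_le_mul_of_nonneg_right (myApply_le _ _ (hx n)) (norm_nonneg _)))
        linarith [e2 ▸ e3]
      have hlim1 : Tendsto (fun n => ‖T (x n)‖ ^ 2
          + re ((starRingEnd 𝕜) lam * (inner 𝕜 (A (x n)) (T (x n)) : 𝕜))) atTop
          (𝓝 (‖T‖ ^ 2 + re ((starRingEnd 𝕜) lam * β))) :=
        (h2.pow 2).add ((RCLike.continuous_re.tendsto _).comp (h3.const_mul _))
      have hlim2 : Tendsto (fun n => ‖T + lam • A‖ * ‖T (x n)‖) atTop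
          (𝓝 (‖T + lam • A‖ * ‖T‖)) := h2.const_mul _
      have := le_of_tendsto_of_tendsto' hlim1 hlim2 key
      simp only [mem_setOf_eq]
      linarith
    have h0 := convexHull_min hWs (convex_halfSpace_le hlin Cc) h
    simp only [mem_setOf_eq, mul_zero, map_zero] at h0
    nlinarith
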